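/- Let m ≥ 1. If there exists n ≥ 0 with m ≤ 2ⁿ such that P(T_n, m×m) = P(T_{n+1}, m×m), then P(T_n, m×m) = P(T_{n+k}, m×m) for every integer k ≥ 1; in particular P(T_n, m×m) = P(T, m×m). -/

import Mathlib

/-- The 16-letter alphabet 𝒜 = {A,…,P}. -/
inductive A16 : Type
  | A | B | C | D | E | F | G | H | I | J | K | L | M | N | O | P
  deriving DecidableEq

/-- The 2×2 block substitution μ on 𝒜 (rows top to bottom). -/
def mu : A16 → Fin 2 → Fin 2 → A16
  | .A => ![![.A, .F], ![.G, .C]]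
  | .B => ![![.A, .F], ![.H, .D]]
  | .C => ![![.B, .E], ![.G, .C]]
  | .D => ![![.B, .E], ![.H, .D]]
  | .E => ![![.A, .N], ![.G, .K]]
  | .F => ![![.A, .N], ![.H, .L]]
  | .G => ![![.B, .M], ![.G, .K]]
  | .H => ![![.B, .M], ![.H, .L]]
  | .I => ![![.I, .F], ![.O, .C]]
  | .J => ![![.I, .F], ![.P, .D]]
  | .K => ![![.J, .E], ![.O, .C]]
  | .L => ![![.J, .E], ![.P, .D]]
  | .M => ![![.I, .N], ![.O, .K]]
  | .N => ![![.I, .N], ![.P, .L]]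
  | .O => ![![.J, .M], ![.O, .K]]
  | .P => ![![.J, .M], ![.P, .L]]

/-- Entry version of μ, indexed by arbitrary naturals (via mod 2). -/
def muE (x : A16) (r c : ℕ) : A16 :=
  mu x ⟨r % 2, by omega⟩ ⟨c % 2, by omega⟩

/-- `superE n x` is the supertile μⁿ(x), a 2ⁿ×2ⁿ array over 𝒜,
given as a total function on ℕ × ℕ (only indices < 2ⁿ are relevant). -/
def superE : ℕ → A16 → ℕ → ℕ → A16
  | 0, x, _, _ => x
  | n + 1, x, r, c => muE (superE n x (r / 2) (c / 2)) r c

/-- The supertile T_k = μᵏ(N). -/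
def Tfun (k : ℕ) : ℕ → ℕ → A16 := superE k .N

/-- An m×n pattern over the alphabet α. -/
abbrev Pat (α : Type) (m n : ℕ) := Fin m → Fin n → α

/-- The set of m×n patterns occurring in the size×size array X. -/
def patIn {α : Type} (X : ℕ → ℕ → α) (size m n : ℕ) : Set (Pat α m n) :=
  { p | ∃ r c : ℕ, r + m ≤ size ∧ c + n ≤ size ∧
      ∀ (i : Fin m) (j : Fin n), p i j = X (r + i) (c + j) }

/-- P(T, m×n) = ⋃ₖ P(T_k, m×n). -/
def PT (m n : ℕ) : Set (Pat A16 m n) := ⋃ k : ℕ, patIn (Tfun k) (2 ^ k) m n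

/-- μ applied to an m×n pattern, as a total 2m×2n array on ℕ × ℕ
(indices are reduced mod the valid range; in range this is exactly μ(p)). -/
def muPatE {m n : ℕ} (p : Pat A16 m n) (r c : ℕ) : A16 :=
  if hm : 0 < m then
    if hn : 0 < n then
      muE (p ⟨r / 2 % m, Nat.mod_lt _ hm⟩ ⟨c / 2 % n, Nat.mod_lt _ hn⟩) r c
    else .A
  else .A

/-- μ² applied to an m×n pattern, as a total 4m×4n array on ℕ × ℕ. -/
def mu2PatE {m n : ℕ} (p : Pat A16 m n) (r c : ℕ) : A16 :=
  muE (muPatE p (r / 2) (c / 2)) r c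

/-- P_{i,j}(T, m×n) = { μ(x)[i,j,m×n] : x ∈ P(T,m×n) } (1-based corner (i,j)). -/
def Pij (i j m n : ℕ) : Set (Pat A16 m n) :=
  { q | ∃ x ∈ PT m n, ∀ (a : Fin m) (b : Fin n),
      q a b = muPatE x (i - 1 + a) (j - 1 + b) }

/-- Q_{i,j}(T, m×n) = { μ²(x)[i,j,m×n] : x ∈ P(T,m×n) } (1-based corner (i,j)). -/
def Qij (i j m n : ℕ) : Set (Pat A16 m n) :=
  { q | ∃ x ∈ PT m n, ∀ (a : Fin m) (b : Fin n),
      q a b = mu2PatE x (i - 1 + a) (j - 1 + b) }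

/-- The 2×2 block substitution φ from 𝒜 to ℬ = {0,1,2,3}. -/
def phi : A16 → Fin 2 → Fin 2 → Fin 4
  | .A => ![![0, 1], ![0, 0]]
  | .B => ![![0, 1], ![1, 1]]
  | .C => ![![1, 0], ![0, 0]]
  | .D => ![![1, 0], ![1, 1]]
  | .E => ![![0, 3], ![0, 2]]
  | .F => ![![0, 3], ![1, 3]]
  | .G => ![![1, 2], ![0, 2]]
  | .H => ![![1, 2], ![1, 3]]
  | .I => ![![2, 1], ![2, 0]]
  | .J => ![![2, 1], ![3, 1]]
  | .K => ![![3, 0], ![2, 0]]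
  | .L => ![![3, 0], ![3, 1]]
  | .M => ![![2, 3], ![2, 2]]
  | .N => ![![2, 3], ![3, 3]]
  | .O => ![![3, 2], ![2, 2]]
  | .P => ![![3, 2], ![3, 3]]

/-- Entry version of φ, indexed by arbitrary naturals (via mod 2). -/
def phiE (x : A16) (r c : ℕ) : Fin 4 :=
  phi x ⟨r % 2, by omega⟩ ⟨c % 2, by omega⟩

/-- φ applied to an m×n pattern over 𝒜, as a total 2m×2n array on ℕ × ℕ. -/
def phiPatE {m n : ℕ} (p : Pat A16 m n) (r c : ℕ) : Fin 4 :=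
  if hm : 0 < m then
    if hn : 0 < n then
      phiE (p ⟨r / 2 % m, Nat.mod_lt _ hm⟩ ⟨c / 2 % n, Nat.mod_lt _ hn⟩) r c
    else 0
  else 0

/-- φ(T_k), a 2^(k+1)×2^(k+1) array over ℬ. -/
def Sfun (k : ℕ) (r c : ℕ) : Fin 4 := phiE (Tfun k (r / 2) (c / 2)) r c

/-- P(S, m×n) = ⋃_{k≥1} P(φ(T_{k-1}), m×n). -/
def PS (m n : ℕ) : Set (Pat (Fin 4) m n) :=
  ⋃ k : ℕ, patIn (Sfun k) (2 ^ (k + 1)) m n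

/-- P_{i,j}(S, m×n) = { φ(x)[i,j,m×n] : x ∈ P(T,m×n) } (1-based corner (i,j)). -/
def PSij (i j m n : ℕ) : Set (Pat (Fin 4) m n) :=
  { q | ∃ x ∈ PT m n, ∀ (a : Fin m) (b : Fin n),
      q a b = phiPatE x (i - 1 + a) (j - 1 + b) }

/-- A_n = |P(S, n×n)|. -/
noncomputable def Acnt (n : ℕ) : ℕ := Nat.card (PS n n)

/-- a_{i,j}(n) = |P_{i,j}(T, n×n)|. -/
noncomputable def aT (i j n : ℕ) : ℕ := Nat.card (Pij i j n n)

/-- b_{i,j}(n) = |P_{i,j}(T, n×(n+1))|. -/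
noncomputable def bT (i j n : ℕ) : ℕ := Nat.card (Pij i j n (n + 1))

/-- c_{i,j}(n) = |P_{i,j}(T, (n+1)×n)|. -/
noncomputable def cT (i j n : ℕ) : ℕ := Nat.card (Pij i j (n + 1) n)

/-- Lemma 3.2: if P(T_n, m×m) = P(T_{n+1}, m×m) for some n with m ≤ 2ⁿ, then
P(T_n, m×m) = P(T_{n+k}, m×m) for all k ≥ 1, and P(T_n, m×m) = P(T, m×m). -/
lemma muE_congr (x : A16) {r c d e : ℕ} (hr : r % 2 = d % 2) (hc : c % 2 = e % 2) :
    muE x r c = muE x d e := by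
  simp only [muE, hr, hc]

lemma superE_decomp (n : ℕ) (x : A16) (r c : ℕ) : superE (n+1) x r c
    = superE n (muE x (r / 2 ^ n) (c / 2 ^ n)) (r % 2 ^ n) (c % 2 ^ n) := by
  induction n generalizing r c with
  | zero =>
      simp [superE]
  | succ n ih =>
      show muE (superE (n+1) x (r/2) (c/2)) r c = _
      rw [ih]
      show _ = muE (superE n (muE x (r / 2^(n+1)) (c / 2^(n+1)))
            ((r % 2^(n+1)) / 2) ((c % 2^(n+1)) / 2)) (r % 2^(n+1)) (c % 2^(n+1))
      have e1 : r / 2 / 2 ^ n = r / 2 ^ (n+1) := by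
        rw [Nat.div_div_eq_div_mul, pow_succ, mul_comm]
      have e2 : c / 2 / 2 ^ n = c / 2 ^ (n+1) := by
        rw [Nat.div_div_eq_div_mul, pow_succ, mul_comm]
      have e3 : r / 2 % 2 ^ n = (r % 2^(n+1)) / 2 := by
        rw [pow_succ, mul_comm, Nat.mod_mul_right_div_self]
      have e4 : c / 2 % 2 ^ n = (c % 2^(n+1)) / 2 := by
        rw [pow_succ, mul_comm, Nat.mod_mul_right_div_self]
      rw [e1, e2, e3, e4]
      refine muE_congr _ ?_ ?_ <;>
        · rw [Nat.mod_mod_of_dvd _ (dvd_pow_self 2 (Nat.succ_ne_zero n))]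

lemma Tfun_embed (k r c : ℕ) (hr : r < 2 ^ k) (hc : c < 2 ^ k) :
    Tfun (k+1) r (2 ^ k + c) = Tfun k r c := by
  show superE (k+1) A16.N r (2^k + c) = superE k A16.N r c
  rw [superE_decomp]
  have h1 : r / 2 ^ k = 0 := Nat.div_eq_of_lt hr
  have h2 : r % 2 ^ k = r := Nat.mod_eq_of_lt hr
  have h3 : (2 ^ k + c) / 2 ^ k = 1 := by
    rw [Nat.add_div_left _ (Nat.pow_pos (by norm_num) : 0 < 2 ^ k), Nat.div_eq_of_lt hc]
  have h4 : (2 ^ k + c) % 2 ^ k = c := by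
    rw [Nat.add_mod_left, Nat.mod_eq_of_lt hc]
  rw [h1, h2, h3, h4]
  have : muE A16.N 0 1 = A16.N := by decide
  rw [this]

lemma patIn_mono (k m m' : ℕ) :
    patIn (Tfun k) (2 ^ k) m m' ⊆ patIn (Tfun (k+1)) (2 ^ (k+1)) m m' := by
  rintro p ⟨r, c, hr, hc, hp⟩
  refine ⟨r, 2 ^ k + c, by rw [pow_succ]; omega, by rw [pow_succ]; omega, fun i j => ?_⟩
  rw [hp i j, Nat.add_assoc, Tfun_embed k _ _ (by omega) (by omega)]
lemma stepC (m j : ℕ) (hm : 1 ≤ m) (hj : m ≤ 2 ^ j)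
    (hsub : patIn (Tfun (j+1)) (2^(j+1)) m m ⊆ patIn (Tfun j) (2^j) m m) :
    patIn (Tfun (j+2)) (2^(j+2)) m m ⊆ patIn (Tfun (j+1)) (2^(j+1)) m m := by
  have hP : 0 < 2 ^ j := Nat.pow_pos (by norm_num)
  have hP1 : 2 ^ (j+1) = 2 * 2 ^ j := by rw [pow_succ]; ring
  have hP2 : 2 ^ (j+2) = 4 * 2 ^ j := by rw [pow_succ, pow_succ]; ring
  rintro p ⟨r, c, hr, hc, hp⟩
  set u := min (r / 2) (2^(j+1) - m) with hu
  set v := min (c / 2) (2^(j+1) - m) with hv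
  have hu1 : u ≤ r / 2 := min_le_left _ _
  have hu2 : u ≤ 2^(j+1) - m := min_le_right _ _
  have hv1 : v ≤ c / 2 := min_le_left _ _
  have hv2 : v ≤ 2^(j+1) - m := min_le_right _ _
  have hucov : (r + m - 1) / 2 < u + m := by
    rcases min_cases (r / 2) (2^(j+1) - m) with ⟨h1, h2⟩ | ⟨h1, h2⟩ <;> omega
  have hvcov : (c + m - 1) / 2 < v + m := by
    rcases min_cases (c / 2) (2^(j+1) - m) with ⟨h1, h2⟩ | ⟨h1, h2⟩ <;> omega
  have hqmem : (fun (a b : Fin m) => Tfun (j+1) (u + a) (v + b)) ∈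
      patIn (Tfun (j+1)) (2^(j+1)) m m :=
    ⟨u, v, by omega, by omega, fun a b => rfl⟩
  obtain ⟨r₀, c₀, hr₀, hc₀, hq⟩ := hsub hqmem
  refine ⟨r + 2*r₀ - 2*u, c + 2*c₀ - 2*v, by omega, by omega, fun i jx => ?_⟩
  have hi : (i : ℕ) < m := i.isLt
  have hjx : (jx : ℕ) < m := jx.isLt
  have ha : (r + (i : ℕ)) / 2 - u < m := by omega
  have hb : (c + (jx : ℕ)) / 2 - v < m := by omega
  have e1 : (r + 2*r₀ - 2*u + (i : ℕ)) / 2 = r₀ + ((r + (i : ℕ)) / 2 - u) := by omega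
  have e2 : (c + 2*c₀ - 2*v + (jx : ℕ)) / 2 = c₀ + ((c + (jx : ℕ)) / 2 - v) := by omega
  have Tstep : ∀ (k X Y : ℕ), Tfun (k+1) X Y = muE (Tfun k (X/2) (Y/2)) X Y :=
    fun _ _ _ => rfl
  rw [hp i jx]
  have L : Tfun (j+2) (r + (i : ℕ)) (c + (jx : ℕ))
      = muE (Tfun (j+1) ((r + (i : ℕ))/2) ((c + (jx : ℕ))/2))
          (r + (i : ℕ)) (c + (jx : ℕ)) := rfl
  have R : Tfun (j+1) (r + 2*r₀ - 2*u + (i : ℕ)) (c + 2*c₀ - 2*v + (jx : ℕ))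
      = muE (Tfun j ((r + 2*r₀ - 2*u + (i : ℕ))/2) ((c + 2*c₀ - 2*v + (jx : ℕ))/2))
          (r + 2*r₀ - 2*u + (i : ℕ)) (c + 2*c₀ - 2*v + (jx : ℕ)) := rfl
  rw [L, R, e1, e2]
  have key := hq ⟨(r + (i : ℕ)) / 2 - u, ha⟩ ⟨(c + (jx : ℕ)) / 2 - v, hb⟩
  simp only at key
  have eu : u + ((r + (i : ℕ)) / 2 - u) = (r + (i : ℕ)) / 2 := by omega
  have ev : v + ((c + (jx : ℕ)) / 2 - v) = (c + (jx : ℕ)) / 2 := by omega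
  rw [eu, ev] at key
  rw [← key]
  exact muE_congr _ (by omega) (by omega)

theorem unique_plateau (m : ℕ) (hm : 1 ≤ m) (n : ℕ) (hmn : m ≤ 2 ^ n)
    (h : patIn (Tfun n) (2 ^ n) m m = patIn (Tfun (n + 1)) (2 ^ (n + 1)) m m) :
    (∀ k : ℕ, 1 ≤ k →
        patIn (Tfun n) (2 ^ n) m m = patIn (Tfun (n + k)) (2 ^ (n + k)) m m) ∧
      patIn (Tfun n) (2 ^ n) m m = PT m m := by
  have chain : ∀ k : ℕ,
      patIn (Tfun (n+k+1)) (2^(n+k+1)) m m ⊆ patIn (Tfun (n+k)) (2^(n+k)) m m := by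
    intro k
    induction k with
    | zero => exact h.symm.subset
    | succ k ih =>
        exact stepC m (n+k) hm
          (le_trans hmn (Nat.pow_le_pow_right (by norm_num) (by omega))) ih
  have eqk : ∀ k : ℕ, patIn (Tfun n) (2^n) m m = patIn (Tfun (n+k)) (2^(n+k)) m m := by
    intro k
    induction k with
    | zero => rfl
    | succ k ih =>
        refine Set.Subset.antisymm ?_ ?_
        · rw [ih]; exact patIn_mono (n+k) m m
        · intro p hp; rw [ih]; exact chain k hp
  have monoUp : ∀ k d : ℕ, patIn (Tfun k) (2^k) m m ⊆ patIn (Tfun (k+d)) (2^(k+d)) m m := by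
    intro k d
    induction d with
    | zero => exact subset_rfl
    | succ d ih => exact ih.trans (patIn_mono (k+d) m m)
  refine ⟨fun k _ => eqk k, Set.Subset.antisymm ?_ ?_⟩
  · exact Set.subset_iUnion (fun k => patIn (Tfun k) (2^k) m m) n
  · intro p hp
    obtain ⟨k, hpk⟩ := Set.mem_iUnion.mp hp
    rcases le_or_gt k n with hk | hk
    · have := monoUp k (n - k) hpk
      rwa [show k + (n - k) = n from by omega] at this
    · have := eqk (k - n)
      rw [show n + (k - n) = k from by omega] at this
      rw [this]; exact hpk
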